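/- Let R be a unital non-associative ring, I a set well-ordered by ≪, Δ = {δ_i}_{i∈I} a commutative family of additive maps δ_i : R → R with δ_i(1) = 0, and S = R[ℕ^(I); π] the associated differential monoid ring. Then for every r ∈ R and every f ∈ ℕ^(I), the following identity holds in S: (r x^0)·(1 x^f) = Σ_{g ≤ f} (−1)^{|g|} C(f,g) (1 x^{f−g})·(δ^g(r) x^0), where |g| = Σ_{i∈I} g(i). -/

import Mathlib

open scoped Classical

/-! Framework for the differential monoid ring `S = R[ℕ^(I); π]` associated with a
family `Δ = {δ_i}_{i ∈ I}` of additive maps `δ_i : R → R` with `δ_i(1) = 0`, where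
`I` is well-ordered by `≪` (encoded as a `LinearOrder` with well-founded `<`).
Here `ℕ^(I)` is the additive monoid `I →₀ ℕ` of finitely supported functions, the
ring `S` is `(I →₀ ℕ) →₀ R` (with `Finsupp.single f r` representing `r x^f`), and
`π^f_g(r) = C(f,g)·δ^{f-g}(r)` for `g ≤ f` and `π^f_g = 0` otherwise. -/

/-- A two-sided ideal with respect to a (possibly non-associative, non-unital)
multiplication `m` on an additive group `A`. -/
structure IsIdealWith {A : Type*} [AddCommGroup A] (m : A → A → A) (J : Set A) : Prop where
  zero_mem : (0 : A) ∈ J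
  add_mem : ∀ {x y : A}, x ∈ J → y ∈ J → x + y ∈ J
  neg_mem : ∀ {x : A}, x ∈ J → -x ∈ J
  mul_mem_left : ∀ (r : A) {x : A}, x ∈ J → m r x ∈ J
  mul_mem_right : ∀ {x : A} (r : A), x ∈ J → m x r ∈ J

/-- The subset `F` of `A` is a field with respect to the multiplication `m` with
identity `one`. -/
def IsFieldWith {A : Type*} [AddCommGroup A] (m : A → A → A) (one : A) (F : Set A) : Prop :=
  one ∈ F ∧ (∀ x ∈ F, ∀ y ∈ F, x + y ∈ F) ∧ (∀ x ∈ F, -x ∈ F) ∧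
  (∀ x ∈ F, ∀ y ∈ F, m x y ∈ F) ∧ (∀ x ∈ F, ∀ y ∈ F, m x y = m y x) ∧
  (∀ x ∈ F, x ≠ 0 → ∃ y ∈ F, m x y = one ∧ m y x = one)

/-- `A` is simple w.r.t. the multiplication `m`: `{0}` and `A` are its only
two-sided ideals. -/
def SimpleWith {A : Type*} [AddCommGroup A] (m : A → A → A) : Prop :=
  ∀ J : Set A, IsIdealWith m J → J = {0} ∨ J = Set.univ

/-- The center of `A` w.r.t. the multiplication `m`: elements commuting with all
elements whose associator with any two elements (in any position) vanishes. -/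
def centerWith {A : Type*} [AddCommGroup A] (m : A → A → A) : Set A :=
  {u | (∀ v, m u v = m v u) ∧ (∀ v w, m (m u v) w = m u (m v w)) ∧
       (∀ v w, m (m v u) w = m v (m u w)) ∧ (∀ v w, m (m v w) u = m v (m w u))}

variable {R : Type*} [NonAssocRing R] {I : Type*} [LinearOrder I]

/-- `δ^f = δ_{i₁}^{f(i₁)} ∘ ⋯ ∘ δ_{iₘ}^{f(iₘ)}` where `i₁ ≪ ⋯ ≪ iₘ` is the support
of `f` listed in increasing order. -/
def deltaPow (δ : I → R → R) (f : I →₀ ℕ) : R → R :=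
  ((f.support.sort (· ≤ ·)).map fun i => (δ i)^[f i]).foldr (· ∘ ·) id

/-- `C(f,g) = ∏ᵢ binomial (f i) (g i)` (equal to `0` whenever `g ≰ f`). -/
def binomF (f g : I →₀ ℕ) : ℕ :=
  ∏ i ∈ f.support ∪ g.support, Nat.choose (f i) (g i)

/-- `π^f_g(r) = C(f,g)·δ^{f-g}(r)` for `g ≤ f`, and `π^f_g = 0` otherwise. -/
noncomputable def piN (δ : I → R → R) (f g : I →₀ ℕ) (r : R) : R :=
  if g ≤ f then (binomF f g) • deltaPow δ (f - g) r else 0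

/-- `R_Δ = ⋂ᵢ ker δᵢ`. -/
def RDelta (δ : I → R → R) : Set R := {r | ∀ i : I, δ i r = 0}

/-- `Δ` is a set of left kernel derivations: each `δᵢ` is left `R_Δ`-linear. -/
def LeftKernel (δ : I → R → R) : Prop :=
  ∀ i : I, ∀ s ∈ RDelta δ, ∀ r : R, δ i (s * r) = s * δ i r

/-- `Δ` is a set of right kernel derivations: each `δᵢ` is right `R_Δ`-linear. -/
def RightKernel (δ : I → R → R) : Prop :=
  ∀ i : I, ∀ r : R, ∀ s ∈ RDelta δ, δ i (r * s) = δ i r * s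

/-- `R` is `Δ`-simple: `{0}` and `R` are its only `Δ`-invariant ideals. -/
def DeltaSimple (δ : I → R → R) : Prop :=
  ∀ J : Set R, IsIdealWith (· * ·) J → (∀ i : I, ∀ r ∈ J, δ i r ∈ J) →
    J = {0} ∨ J = Set.univ

/-- The multiplication of the differential monoid ring `S = R[ℕ^(I); π]` on
`(I →₀ ℕ) →₀ R`: the biadditive extension of
`(r x^f)(s x^g) = Σ_h r π^f_h(s) x^{h+g}`. -/
noncomputable def mulN (δ : I → R → R) (u v : (I →₀ ℕ) →₀ R) : (I →₀ ℕ) →₀ R :=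
  u.sum fun f r => v.sum fun g s =>
    ∑ h ∈ Finset.Iic f, Finsupp.single (h + g) (r * piN δ f h s)

section Aux

lemma endPow_eq_iterate {R : Type*} (g : Function.End R) (n : ℕ) :
    ((g ^ n : Function.End R) : R → R) = (g : R → R)^[n] := by
  induction n with
  | zero => rfl
  | succ n ih => rfl

lemma noncommProd_eq_one' {α M : Type*} [Monoid M] (s : Finset α) (g : α → M)
    (comm) (h : ∀ i ∈ s, g i = 1) : s.noncommProd g comm = 1 := by
  induction s using Finset.cons_induction with
  | empty => exact Finset.noncommProd_empty _ _
  | cons a s ha ih =>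
    rw [Finset.noncommProd_cons, h a (Finset.mem_cons_self a s), one_mul]
    exact ih _ fun i hi => h i (Finset.mem_cons_of_mem hi)

lemma noncommProd_superset' {α M : Type*} [Monoid M] {s t : Finset α} (hst : s ⊆ t)
    (g : α → M) (comm) (h1 : ∀ i ∈ t, i ∉ s → g i = 1) :
    t.noncommProd g comm =
      s.noncommProd g (comm.mono (Finset.coe_subset.2 hst)) := by
  classical
  have ht : t = s ∪ (t \ s) := by rw [Finset.union_sdiff_of_subset hst]
  have e : t.noncommProd g comm = (s ∪ t \ s).noncommProd g (by rw [← ht]; exact comm) :=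
    Finset.noncommProd_congr ht (fun x _ => rfl) comm
  rw [e,
    Finset.noncommProd_union_of_disjoint Finset.disjoint_sdiff]
  rw [noncommProd_eq_one' (t \ s) g _ (fun i hi => h1 i (Finset.mem_sdiff.1 hi).1
    (Finset.mem_sdiff.1 hi).2), mul_one]

section DeltaStuff

variable {R : Type*} [NonAssocRing R] {I : Type*} [LinearOrder I]

/-- `δ i` viewed as an element of the endomorphism monoid. -/
def toEnd (δ : I → R → R) (i : I) : Function.End R := δ i

lemma commPow (δ : I → R → R) (hcomm : ∀ i j : I, δ i ∘ δ j = δ j ∘ δ i) (f : I → ℕ) (s : Finset I) :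
    (↑s : Set I).Pairwise (Function.onFun Commute fun i => toEnd δ i ^ f i) :=
  fun i _ j _ _ => Commute.pow_pow (show Commute (toEnd δ i) (toEnd δ j) from hcomm i j) _ _

/-- `deltaPow` repackaged as a `noncommProd` in `Function.End R`. -/
noncomputable def Ef (δ : I → R → R) (hcomm : ∀ i j : I, δ i ∘ δ j = δ j ∘ δ i) (f : I →₀ ℕ) : Function.End R :=
  f.support.noncommProd (fun i => toEnd δ i ^ f i)
    (commPow δ hcomm _ _)

lemma Ef_superset (δ : I → R → R) (hcomm : ∀ i j : I, δ i ∘ δ j = δ j ∘ δ i) (f : I →₀ ℕ) {t : Finset I} (h : f.support ⊆ t) :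
    t.noncommProd (fun i => toEnd δ i ^ f i) (commPow δ hcomm _ _) =
      Ef δ hcomm f := by
  rw [noncommProd_superset' h _ _ (fun i _ hi => by
    rw [Finsupp.notMem_support_iff.1 hi, pow_zero])]
  rfl

lemma Ef_add (δ : I → R → R) (hcomm : ∀ i j : I, δ i ∘ δ j = δ j ∘ δ i) (a b : I →₀ ℕ) :
    Ef δ hcomm (a + b) = Ef δ hcomm a * Ef δ hcomm b := by
  classical
  have hsub : (a + b).support ⊆ a.support ∪ b.support := Finsupp.support_add
  rw [← Ef_superset δ hcomm (a + b) hsub,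
    ← Ef_superset δ hcomm a (Finset.subset_union_left),
    ← Ef_superset δ hcomm b (Finset.subset_union_right),
    ← Finset.noncommProd_mul_distrib _ _ (commPow δ hcomm _ _) (commPow δ hcomm _ _)
      (fun x _ y _ _ =>
        Commute.pow_pow (show Commute (toEnd δ x) (toEnd δ y) from hcomm x y) _ _)]
  exact Finset.noncommProd_congr rfl
    (fun i _ => by simp [Finsupp.add_apply, pow_add]) _

lemma list_foldr_eq_prod (δ : I → R → R) (f : I →₀ ℕ) : ∀ l : List I,
    (l.map fun i => (δ i)^[f i]).foldr (· ∘ ·) id =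
      ((l.map fun i => toEnd δ i ^ f i)).prod := by
  intro l
  induction l with
  | nil => rfl
  | cons a l ih =>
    rw [List.map_cons, List.map_cons, List.foldr_cons, List.prod_cons, ih]
    rfl

lemma deltaPow_eq_Ef (δ : I → R → R) (hcomm : ∀ i j : I, δ i ∘ δ j = δ j ∘ δ i) (f : I →₀ ℕ) : deltaPow δ f = (Ef δ hcomm f : R → R) := by
  have c2 : {x | x ∈ (↑(List.map (fun i => toEnd δ i ^ f i)
      (f.support.sort (· ≤ ·))) : Multiset (Function.End R))}.Pairwise Commute := by
    intro x hx y hy _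
    simp only [Set.mem_setOf_eq, Multiset.mem_coe, List.mem_map] at hx hy
    obtain ⟨i, _, rfl⟩ := hx
    obtain ⟨j, _, rfl⟩ := hy
    exact Commute.pow_pow (show Commute (toEnd δ i) (toEnd δ j) from hcomm i j) _ _
  have hms : Multiset.map (fun i => toEnd δ i ^ f i) f.support.val =
      (↑(List.map (fun i => toEnd δ i ^ f i) (f.support.sort (· ≤ ·))) :
        Multiset (Function.End R)) := by
    rw [← Finset.sort_eq (s := f.support) (r := (· ≤ ·)), Multiset.map_coe]
  have hEf : Ef δ hcomm f =
      (List.map (fun i => toEnd δ i ^ f i) (f.support.sort (· ≤ ·))).prod := by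
    rw [show Ef δ hcomm f = Multiset.noncommProd
        (↑(List.map (fun i => toEnd δ i ^ f i) (f.support.sort (· ≤ ·)))) c2 from by
      unfold Ef Finset.noncommProd
      congr 1,
      Multiset.noncommProd_coe]
  rw [hEf]
  unfold deltaPow
  exact list_foldr_eq_prod δ f _

lemma deltaPow_add (δ : I → R → R) (hcomm : ∀ i j : I, δ i ∘ δ j = δ j ∘ δ i) (a b : I →₀ ℕ) (r : R) :
    deltaPow δ (a + b) r = deltaPow δ a (deltaPow δ b r) := by
  rw [deltaPow_eq_Ef δ hcomm, deltaPow_eq_Ef δ hcomm, deltaPow_eq_Ef δ hcomm, Ef_add δ hcomm]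
  rfl

lemma deltaPow_zero_eq_id (δ : I → R → R) : deltaPow δ (0 : I →₀ ℕ) = id := by
  simp [deltaPow]

lemma deltaPow_map_zero (δ : I → R → R) (hadd : ∀ (i : I) (r s : R), δ i (r + s) = δ i r + δ i s)
    (f : I →₀ ℕ) : deltaPow δ f (0 : R) = 0 := by
  have h0 : ∀ i : I, δ i 0 = 0 := fun i => by
    have h := hadd i 0 0
    rw [add_zero] at h
    exact (add_eq_left.1 h.symm)
  have hiter : ∀ (i : I) (n : ℕ), (δ i)^[n] (0 : R) = 0 := by
    intro i n
    induction n with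
    | zero => rfl
    | succ n ih => rw [Function.iterate_succ_apply, h0, ih]
  unfold deltaPow
  generalize (f.support.sort (· ≤ ·)) = l
  induction l with
  | nil => rfl
  | cons a l ih =>
    rw [List.map_cons, List.foldr_cons]
    simpa [ih] using congrArg ((δ a)^[f a]) ih |>.trans (hiter a (f a))

end DeltaStuff

section FinsuppNat

variable {I : Type*} [LinearOrder I]

lemma fs_le_sub {f g h : I →₀ ℕ} (hg : g ≤ f) : h ≤ f - g ↔ g + h ≤ f := by
  simp only [Finsupp.le_def, Finsupp.tsub_apply, Finsupp.add_apply]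
  exact forall_congr' fun i => by have := Finsupp.le_def.1 hg i; omega

lemma fs_sub_sub {f g h : I →₀ ℕ} (hg : g ≤ f) (hgh : g + h ≤ f) :
    (f - g - h) + g = f - h := by
  ext i
  have h1 := Finsupp.le_def.1 hg i
  have h2 := Finsupp.le_def.1 hgh i
  simp only [Finsupp.add_apply] at h2 ⊢
  simp only [Finsupp.tsub_apply]
  omega

lemma fs_sub_self (f : I →₀ ℕ) : f - f = 0 := by
  ext i; simp [Finsupp.tsub_apply]

lemma fs_eq_iff_sub_zero {f h : I →₀ ℕ} (hh : h ≤ f) : h = f ↔ f - h = 0 := by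
  constructor
  · rintro rfl; exact fs_sub_self _
  · intro h0
    ext i
    have h1 := Finsupp.le_def.1 hh i
    have h2 : (f - h) i = 0 := by rw [h0]; rfl
    rw [Finsupp.tsub_apply] at h2
    omega

lemma Iic_zero : Finset.Iic (0 : I →₀ ℕ) = {0} := by
  ext g
  simp [Finset.mem_Iic, nonpos_iff_eq_zero]

lemma Iic_sub_eq_filter {f g : I →₀ ℕ} (hg : g ≤ f) :
    Finset.Iic (f - g) = (Finset.Iic f).filter (fun h => g + h ≤ f) := by
  ext h
  simp only [Finset.mem_Iic, Finset.mem_filter]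
  rw [fs_le_sub hg]
  constructor
  · intro hh
    exact ⟨le_trans ((fs_le_sub hg).2 hh) (by intro i; simp), hh⟩
  · exact fun hh => hh.2

end FinsuppNat

section BinomFStuff

variable {R : Type*} [NonAssocRing R] {I : Type*} [LinearOrder I]

lemma binomF_eq_prod (f g : I →₀ ℕ) {s : Finset I} (hf : f.support ⊆ s)
    (hg : g.support ⊆ s) : binomF f g = ∏ i ∈ s, (f i).choose (g i) := by
  apply Finset.prod_subset (Finset.union_subset hf hg)
  intro i _ hi
  have hfi : f i = 0 := Finsupp.notMem_support_iff.1 fun h =>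
    hi (Finset.mem_union_left _ h)
  have hgi : g i = 0 := Finsupp.notMem_support_iff.1 fun h =>
    hi (Finset.mem_union_right _ h)
  simp [hfi, hgi]

lemma binomF_self (f : I →₀ ℕ) : binomF f f = 1 := by
  unfold binomF
  exact Finset.prod_eq_one fun i _ => Nat.choose_self _

lemma binomF_zero_zero : binomF (0 : I →₀ ℕ) 0 = 1 := by
  simp [binomF]

lemma nat_choose_swap {n k m : ℕ} (h : k + m ≤ n) :
    n.choose k * (n - k).choose m = n.choose m * (n - m).choose k := by
  have h1 := Nat.choose_mul (n := n) (k := k + m) (Nat.le_add_right k m)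
  have h2 := Nat.choose_mul (n := n) (k := k + m) (Nat.le_add_left m k)
  have hsymm : (k + m).choose k = (k + m).choose m := by
    rw [← Nat.choose_symm (Nat.le_add_right k m)]
    congr 1
    omega
  rw [Nat.add_sub_cancel_left] at h1
  rw [Nat.add_sub_cancel] at h2
  rw [← h1, hsymm, h2]

lemma binomF_swap {f g h : I →₀ ℕ} (hgh : g + h ≤ f) :
    binomF f g * binomF (f - g) h = binomF f h * binomF (f - h) g := by
  classical
  set s : Finset I := f.support ∪ g.support ∪ h.support with hs
  have hfs : f.support ⊆ s := by
    intro i hi; exact Finset.mem_union_left _ (Finset.mem_union_left _ hi)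
  have hgs : g.support ⊆ s := by
    intro i hi; exact Finset.mem_union_left _ (Finset.mem_union_right _ hi)
  have hhs : h.support ⊆ s := by
    intro i hi; exact Finset.mem_union_right _ hi
  have hfgs : (f - g).support ⊆ s := fun i hi => hfs (Finsupp.support_tsub hi)
  have hfhs : (f - h).support ⊆ s := fun i hi => hfs (Finsupp.support_tsub hi)
  rw [binomF_eq_prod f g hfs hgs, binomF_eq_prod (f - g) h hfgs hhs,
    binomF_eq_prod f h hfs hhs, binomF_eq_prod (f - h) g hfhs hgs,
    ← Finset.prod_mul_distrib, ← Finset.prod_mul_distrib]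
  apply Finset.prod_congr rfl
  intro i _
  have := Finsupp.le_def.1 hgh i
  simp only [Finsupp.add_apply] at this
  simp only [Finsupp.tsub_apply]
  exact nat_choose_swap (by omega)

lemma alt_sum (k : I →₀ ℕ) :
    (∑ g ∈ Finset.Iic k, (-1 : ℤ) ^ (g.sum fun _ n => n) * (binomF k g : ℤ)) =
      if k = 0 then 1 else 0 := by
  classical
  induction k using Finsupp.induction with
  | zero =>
    rw [if_pos rfl, Iic_zero, Finset.sum_singleton]
    simp [binomF_zero_zero, Finsupp.sum_zero_index]
  | single_add a b f haf hb _ =>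
    have hfa : f a = 0 := Finsupp.notMem_support_iff.1 haf
    have hka : (Finsupp.single a b + f) a = b := by
      simp [Finsupp.add_apply, Finsupp.single_eq_same, hfa]
    have hne : Finsupp.single a b + f ≠ 0 := by
      intro h0
      apply hb
      have := congrArg (fun u : I →₀ ℕ => u a) h0
      simpa [hka] using this
    rw [if_neg hne]
    have key : (∑ g ∈ Finset.Iic (Finsupp.single a b + f),
        (-1 : ℤ) ^ (g.sum fun _ n => n) * (binomF (Finsupp.single a b + f) g : ℤ)) =
        ∑ p ∈ Finset.range (b + 1) ×ˢ Finset.Iic f,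
          ((-1 : ℤ) ^ p.1 * (b.choose p.1 : ℤ)) *
            ((-1 : ℤ) ^ (p.2.sum fun _ n => n) * (binomF f p.2 : ℤ)) := by
      apply Finset.sum_nbij' (fun g => (g a, g.erase a))
        (fun p => Finsupp.single a p.1 + p.2)
      · intro g hg
        have hg' := Finset.mem_Iic.1 hg
        refine Finset.mem_product.2 ⟨?_, ?_⟩
        · rw [Finset.mem_range, Nat.lt_succ_iff, ← hka]
          exact Finsupp.le_def.1 hg' a
        · rw [Finset.mem_Iic]
          intro i
          rcases eq_or_ne i a with rfl | hia
          · simp [Finsupp.erase_same]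
          · have := Finsupp.le_def.1 hg' i
            simpa [Finsupp.erase_ne hia, Finsupp.add_apply,
              Finsupp.single_eq_of_ne hia] using this
      · intro p hp
        obtain ⟨hp1, hp2⟩ := Finset.mem_product.1 hp
        rw [Finset.mem_range, Nat.lt_succ_iff] at hp1
        rw [Finset.mem_Iic] at hp2 ⊢
        intro i
        have h2 := Finsupp.le_def.1 hp2 i
        rcases eq_or_ne i a with rfl | hia
        · simp only [Finsupp.add_apply, Finsupp.single_eq_same]
          omega
        · simp only [Finsupp.add_apply,
            Finsupp.single_eq_of_ne hia]
          omega
      · intro g _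
        exact Finsupp.single_add_erase a g
      · intro p hp
        obtain ⟨_, hp2⟩ := Finset.mem_product.1 hp
        rw [Finset.mem_Iic] at hp2
        have hpa : p.2 a = 0 := by
          have := Finsupp.le_def.1 hp2 a
          omega
        have h1 : (Finsupp.single a p.1 + p.2) a = p.1 := by
          simp [Finsupp.add_apply, Finsupp.single_eq_same, hpa]
        have h2 : (Finsupp.single a p.1 + p.2).erase a = p.2 := by
          rw [Finsupp.erase_add, Finsupp.erase_single,
            Finsupp.erase_of_notMem_support (by
              simp [Finsupp.mem_support_iff, hpa]), zero_add]
        rw [h1, h2]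
      · intro g hg
        have hg' := Finset.mem_Iic.1 hg
        have herase_le : g.erase a ≤ f := by
          intro i
          rcases eq_or_ne i a with rfl | hia
          · simp [Finsupp.erase_same]
          · have := Finsupp.le_def.1 hg' i
            simpa [Finsupp.erase_ne hia, Finsupp.add_apply,
              Finsupp.single_eq_of_ne hia] using this
        have hsum : (g.sum fun _ n => n) = g a + ((g.erase a).sum fun _ n => n) := by
          conv_lhs => rw [← Finsupp.single_add_erase a g]
          rw [Finsupp.sum_add_index' (fun _ => rfl) (fun _ _ _ => rfl),
            Finsupp.sum_single_index rfl]
        have hbin : binomF (Finsupp.single a b + f) g =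
            b.choose (g a) * binomF f (g.erase a) := by
          have hks : (Finsupp.single a b + f).support ⊆ insert a f.support := by
            intro i hi
            rcases Finset.mem_union.1 (Finsupp.support_add hi) with h | h
            · exact Finset.mem_insert.2 (Or.inl (by
                simpa using Finsupp.support_single_subset h))
            · exact Finset.mem_insert_of_mem h
          have hgs : g.support ⊆ insert a f.support := fun i hi =>
            hks (Finsupp.support_mono hg' hi)
          rw [binomF_eq_prod _ g hks hgs,
            binomF_eq_prod f (g.erase a) (le_refl f.support)
              (Finsupp.support_mono herase_le),
            Finset.prod_insert haf, hka]
          congr 1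
          apply Finset.prod_congr rfl
          intro i hi
          have hia : i ≠ a := fun h => haf (h ▸ hi)
          rw [Finsupp.add_apply, Finsupp.single_eq_of_ne hia,
            zero_add, Finsupp.erase_ne hia]
        rw [hsum, hbin, pow_add]
        push_cast
        ring
    rw [key]
    rw [Finset.sum_product]
    dsimp only
    rw [← Finset.sum_mul_sum, Int.alternating_sum_range_choose_of_ne hb, zero_mul]

lemma coeff_sum (f h : I →₀ ℕ) (hh : h ≤ f) :
    (∑ g ∈ Finset.Iic (f - h),
        (-1 : ℤ) ^ (g.sum fun _ n => n) * (binomF f g : ℤ) * (binomF (f - g) h : ℤ)) =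
      if h = f then 1 else 0 := by
  have step : ∀ g ∈ Finset.Iic (f - h),
      (-1 : ℤ) ^ (g.sum fun _ n => n) * (binomF f g : ℤ) * (binomF (f - g) h : ℤ) =
        (binomF f h : ℤ) *
          ((-1 : ℤ) ^ (g.sum fun _ n => n) * (binomF (f - h) g : ℤ)) := by
    intro g hg
    have hg' : g ≤ f - h := Finset.mem_Iic.1 hg
    have hgh : g + h ≤ f := by
      have := (fs_le_sub hh).1 hg'
      rwa [add_comm] at this
    have hsw := binomF_swap hgh
    have : (binomF f g : ℤ) * (binomF (f - g) h : ℤ) =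
        (binomF f h : ℤ) * (binomF (f - h) g : ℤ) := by exact_mod_cast hsw
    calc (-1 : ℤ) ^ (g.sum fun _ n => n) * (binomF f g : ℤ) * (binomF (f - g) h : ℤ)
        = (-1 : ℤ) ^ (g.sum fun _ n => n) *
            ((binomF f g : ℤ) * (binomF (f - g) h : ℤ)) := by ring
      _ = (-1 : ℤ) ^ (g.sum fun _ n => n) *
            ((binomF f h : ℤ) * (binomF (f - h) g : ℤ)) := by rw [this]
      _ = (binomF f h : ℤ) *
            ((-1 : ℤ) ^ (g.sum fun _ n => n) * (binomF (f - h) g : ℤ)) := by ring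
  rw [Finset.sum_congr rfl step, ← Finset.mul_sum, alt_sum (f - h)]
  by_cases hfh : h = f
  · rw [if_pos hfh, if_pos ((fs_eq_iff_sub_zero hh).1 hfh), hfh, binomF_self]
    norm_num
  · rw [if_neg hfh, if_neg (fun h0 => hfh ((fs_eq_iff_sub_zero hh).2 h0)), mul_zero]

end BinomFStuff

section MulNStuff

variable {R : Type*} [NonAssocRing R] {I : Type*} [LinearOrder I]

lemma piN_map_zero (δ : I → R → R)
    (hadd : ∀ (i : I) (r s : R), δ i (r + s) = δ i r + δ i s)
    (a h : I →₀ ℕ) : piN δ a h (0 : R) = 0 := by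
  unfold piN
  split
  · rw [deltaPow_map_zero δ hadd, smul_zero]
  · rfl

lemma mulN_single_single (δ : I → R → R)
    (hadd : ∀ (i : I) (r s : R), δ i (r + s) = δ i r + δ i s)
    (a b : I →₀ ℕ) (r s : R) :
    mulN δ (Finsupp.single a r) (Finsupp.single b s) =
      ∑ h ∈ Finset.Iic a, Finsupp.single (h + b) (r * piN δ a h s) := by
  unfold mulN
  rw [Finsupp.sum_single_index (by
    simp only [zero_mul, Finsupp.single_zero, Finset.sum_const_zero]
    exact Finset.sum_const_zero)]
  rw [Finsupp.sum_single_index (by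
    simp only [piN_map_zero δ hadd, mul_zero, Finsupp.single_zero,
      Finset.sum_const_zero])]

end MulNStuff

end Aux

/-- For a commutative family `Δ` of additive maps with
`δᵢ(1) = 0`, in `S = R[ℕ^(I); π]` the identity
`(r x^0)(1 x^f) = Σ_{g ≤ f} (−1)^{|g|} C(f,g) (1 x^{f−g})·(δ^g(r) x^0)` holds. -/
theorem stmt16 {R : Type*} [NonAssocRing R] {I : Type*} [LinearOrder I]
    [WellFoundedLT I] (δ : I → R → R)
    (hadd : ∀ (i : I) (r s : R), δ i (r + s) = δ i r + δ i s)
    (h1 : ∀ i : I, δ i 1 = 0)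
    (hcomm : ∀ i j : I, δ i ∘ δ j = δ j ∘ δ i)
    (r : R) (f : I →₀ ℕ) :
    mulN δ (Finsupp.single 0 r) (Finsupp.single f (1 : R)) =
      ∑ g ∈ Finset.Iic f,
        ((-1 : ℤ) ^ (g.sum fun _ n => n) * (binomF f g : ℤ)) •
          mulN δ (Finsupp.single (f - g) (1 : R))
            (Finsupp.single 0 (deltaPow δ g r)) := by
  classical
  -- Left-hand side is `single f r`.
  rw [mulN_single_single δ hadd 0 f r 1, Iic_zero, Finset.sum_singleton, zero_add]
  have hpi1 : piN δ 0 0 (1 : R) = 1 := by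
    unfold piN
    rw [if_pos (le_refl _), binomF_zero_zero, fs_sub_self, deltaPow_zero_eq_id]
    simp
  rw [hpi1, mul_one]
  -- Abbreviation for the generic summand.
  set T : (I →₀ ℕ) → (I →₀ ℕ) → ((I →₀ ℕ) →₀ R) := fun g h =>
    Finsupp.single h
      (((-1 : ℤ) ^ (g.sum fun _ n => n) * (binomF f g : ℤ) * (binomF (f - g) h : ℤ)) •
        deltaPow δ (f - h) r) with hT
  -- Each summand of the RHS expands into a sum of `T g h`.
  have hterm : ∀ g ∈ Finset.Iic f,
      ((-1 : ℤ) ^ (g.sum fun _ n => n) * (binomF f g : ℤ)) •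
        mulN δ (Finsupp.single (f - g) (1 : R)) (Finsupp.single 0 (deltaPow δ g r)) =
      ∑ h ∈ Finset.Iic (f - g), T g h := by
    intro g hg
    have hg' : g ≤ f := Finset.mem_Iic.1 hg
    rw [mulN_single_single δ hadd, Finset.smul_sum]
    apply Finset.sum_congr rfl
    intro h hh
    have hh' : h ≤ f - g := Finset.mem_Iic.1 hh
    have hgh : g + h ≤ f := (fs_le_sub hg').1 hh'
    have hpi : piN δ (f - g) h (deltaPow δ g r) =
        binomF (f - g) h • deltaPow δ (f - h) r := by
      unfold piN
      rw [if_pos hh', ← deltaPow_add δ hcomm, fs_sub_sub hg' hgh]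
    rw [add_zero, hpi, one_mul, Finsupp.smul_single, ← natCast_zsmul, smul_smul,
      hT]
  rw [Finset.sum_congr rfl hterm]
  -- Swap the order of summation.
  have h1 : ∀ g ∈ Finset.Iic f, (∑ h ∈ Finset.Iic (f - g), T g h)
      = ∑ h ∈ Finset.Iic f, if g + h ≤ f then T g h else 0 := fun g hg => by
    rw [Iic_sub_eq_filter (Finset.mem_Iic.1 hg), Finset.sum_filter]
  have h2 : ∀ h ∈ Finset.Iic f, (∑ g ∈ Finset.Iic (f - h), T g h)
      = ∑ g ∈ Finset.Iic f, if g + h ≤ f then T g h else 0 := fun h hh => by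
    rw [Iic_sub_eq_filter (Finset.mem_Iic.1 hh), Finset.sum_filter]
    exact Finset.sum_congr rfl fun g _ => by rw [add_comm h g]
  have hswap : (∑ g ∈ Finset.Iic f, ∑ h ∈ Finset.Iic (f - g), T g h)
      = ∑ h ∈ Finset.Iic f, ∑ g ∈ Finset.Iic (f - h), T g h := by
    rw [Finset.sum_congr rfl h1, Finset.sum_comm, ← Finset.sum_congr rfl h2]
  rw [hswap]
  -- Evaluate the inner sums using the alternating-sum identity.
  have hinner : ∀ h ∈ Finset.Iic f, (∑ g ∈ Finset.Iic (f - h), T g h)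
      = if h = f then Finsupp.single h (deltaPow δ (f - h) r) else 0 := by
    intro h hh
    have hh' : h ≤ f := Finset.mem_Iic.1 hh
    have hsingle : (∑ g ∈ Finset.Iic (f - h), T g h) =
        Finsupp.single h
          ((∑ g ∈ Finset.Iic (f - h),
            (-1 : ℤ) ^ (g.sum fun _ n => n) * (binomF f g : ℤ) * (binomF (f - g) h : ℤ)) •
              deltaPow δ (f - h) r) := by
      rw [Finset.sum_smul, ← Finsupp.singleAddHom_apply,
        map_sum (Finsupp.singleAddHom h)]
      rfl
    rw [hsingle, coeff_sum f h hh', ite_smul, one_smul, zero_smul]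
    split_ifs <;> simp
  rw [Finset.sum_congr rfl hinner, Finset.sum_ite_eq' (Finset.Iic f) f
    (fun h => Finsupp.single h (deltaPow δ (f - h) r)),
    if_pos (Finset.mem_Iic.2 (le_refl f)), fs_sub_self, deltaPow_zero_eq_id]
  rfl
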